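/- Let X be a complex Banach space with property (α). Let (U_k)_{k=1}^∞ and (V_k)_{k=1}^∞ be sequences in L(X) with sup_n max_{ε_k=±1} ‖Σ_{k=1}^n ε_k U_k‖ ≤ M and sup_n max_{ε_k=±1} ‖Σ_{k=1}^n ε_k V_k‖ ≤ M. Let 𝒯 ⊆ L(X) be R-bounded with constant R such that every T ∈ 𝒯 commutes with every U_k and every V_k. Then there is a constant C, depending only on the property (α) constant of X, such that the family { Σ_{k=1}^n α_k T_k U_k V_k : n ∈ ℕ, |α_k| ≤ 1, T_k ∈ 𝒯 } is R-bounded with constant C·R·M². -/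

import Mathlib

open MeasureTheory Complex Set Filter

noncomputable section

/-- The sign `±1` attached to a Boolean. -/
def bsign (b : Bool) : ℝ := if b then 1 else -1

section RadDefs

variable {Y : Type*} [NormedAddCommGroup Y] [NormedSpace ℂ Y]

/-- `E ‖∑ εₖ xₖ‖²`, the average over all `2^n` choices of signs. -/
def radAvg {n : ℕ} (x : Fin n → Y) : ℝ :=
  (∑ ε : Fin n → Bool, ‖∑ k, bsign (ε k) • x k‖ ^ 2) / (2 ^ n : ℝ)

/-- `max_{εₖ = ±1} ‖∑ εₖ xₖ‖`. -/
def signSup {n : ℕ} (x : Fin n → Y) : ℝ :=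
  ⨆ ε : Fin n → Bool, ‖∑ k, bsign (ε k) • x k‖

/-- `E ‖∑_{j,k} ε_j η_k x_{jk}‖²`, average over two independent families of signs. -/
def radAvg2 {n : ℕ} (x : Fin n → Fin n → Y) : ℝ :=
  (∑ ε : Fin n → Bool, ∑ η : Fin n → Bool,
    ‖∑ j, ∑ k, (bsign (ε j) * bsign (η k)) • x j k‖ ^ 2) / ((2 ^ n : ℝ) * (2 ^ n : ℝ))

end RadDefs

section Bounded

variable {X : Type*} [NormedAddCommGroup X] [NormedSpace ℂ X]

/-- Rademacher boundedness with constant `C`. -/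
def RBoundedWith (C : ℝ) (𝒯 : Set (X →L[ℂ] X)) : Prop :=
  ∀ (n : ℕ) (T : Fin n → X →L[ℂ] X), (∀ k, T k ∈ 𝒯) → ∀ x : Fin n → X,
    Real.sqrt (radAvg fun k => T k (x k)) ≤ C * Real.sqrt (radAvg x)

/-- Weak Rademacher boundedness with constant `C`. -/
def WRBoundedWith (C : ℝ) (𝒯 : Set (X →L[ℂ] X)) : Prop :=
  ∀ (n : ℕ) (T : Fin n → X →L[ℂ] X), (∀ k, T k ∈ 𝒯) →
    ∀ (x : Fin n → X) (xs : Fin n → X →L[ℂ] ℂ),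
      ∑ k, ‖xs k (T k (x k))‖ ≤ C * Real.sqrt (radAvg x) * Real.sqrt (radAvg xs)

/-- Unconditional boundedness with constant `C`. -/
def UBoundedWith (C : ℝ) (𝒯 : Set (X →L[ℂ] X)) : Prop :=
  ∀ (n : ℕ) (T : Fin n → X →L[ℂ] X), (∀ k, T k ∈ 𝒯) →
    ∀ (x : Fin n → X) (xs : Fin n → X →L[ℂ] ℂ),
      ∑ k, ‖xs k (T k (x k))‖ ≤ C * signSup x * signSup xs

end Bounded

/-- Pisier's property (α) with constant `C`. -/
def PropAlphaWith (C : ℝ) (X : Type*) [NormedAddCommGroup X] [NormedSpace ℂ X] : Prop :=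
  ∀ (n : ℕ) (x : Fin n → Fin n → X) (α : Fin n → Fin n → ℂ), (∀ j k, ‖α j k‖ ≤ 1) →
    Real.sqrt (radAvg2 fun j k => α j k • x j k) ≤ C * Real.sqrt (radAvg2 x)

/-- Property (A) with constant `C`. -/
def PropAWith (C : ℝ) (X : Type*) [NormedAddCommGroup X] [NormedSpace ℂ X] : Prop :=
  ∀ (n : ℕ) (x : Fin n → Fin n → X) (xs : Fin n → Fin n → X →L[ℂ] ℂ),
    ∑ j, ∑ k, ‖xs j k (x j k)‖ ≤ C * Real.sqrt (radAvg2 x) * Real.sqrt (radAvg2 xs)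

/-- Property (Δ) with constant `C`. -/
def PropDeltaWith (C : ℝ) (X : Type*) [NormedAddCommGroup X] [NormedSpace ℂ X] : Prop :=
  ∀ (n : ℕ) (x : Fin n → Fin n → X),
    Real.sqrt (radAvg2 fun j k => if (k : ℕ) ≤ (j : ℕ) then x j k else 0)
      ≤ C * Real.sqrt (radAvg2 x)


section MyAuxST4

lemma bsign_mul_self (b : Bool) : bsign b * bsign b = 1 := by
  cases b <;> norm_num [bsign]

lemma bsign_not (b : Bool) : bsign (!b) = - bsign b := by
  cases b <;> norm_num [bsign]

lemma bsign_beq (a b : Bool) : bsign (a == b) = bsign a * bsign b := by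
  cases a <;> cases b <;> norm_num [bsign]

lemma norm_bsign_le (b : Bool) : ‖((bsign b : ℝ) : ℂ)‖ ≤ 1 := by
  cases b <;> norm_num [bsign]


variable {X : Type*} [NormedAddCommGroup X] [NormedSpace ℂ X]

lemma radAvg_nonneg {n : ℕ} (x : Fin n → X) : 0 ≤ radAvg x := by
  unfold radAvg; positivity

lemma radAvg2_nonneg {n : ℕ} (x : Fin n → Fin n → X) : 0 ≤ radAvg2 x := by
  unfold radAvg2; positivity

lemma sq_le_of_sqrt_le {a b c : ℝ} (ha : 0 ≤ a) (hb : 0 ≤ b)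
    (h : Real.sqrt a ≤ c * Real.sqrt b) : a ≤ c ^ 2 * b := by
  rcases le_or_gt 0 c with hc | hc
  · have h2 := mul_le_mul h h (Real.sqrt_nonneg a) (by positivity)
    calc a = Real.sqrt a * Real.sqrt a := (Real.mul_self_sqrt ha).symm
      _ ≤ (c * Real.sqrt b) * (c * Real.sqrt b) := h2
      _ = c ^ 2 * (Real.sqrt b * Real.sqrt b) := by ring
      _ = c ^ 2 * b := by rw [Real.mul_self_sqrt hb]
  · have h0 : Real.sqrt a ≤ 0 := by nlinarith [Real.sqrt_nonneg b]
    have ha0 : a = 0 := by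
      have := Real.sqrt_nonneg a
      have hs : Real.sqrt a = 0 := le_antisymm h0 this
      nlinarith [Real.sq_sqrt ha]
    rw [ha0]; positivity

lemma sum_bsign_orth {q : ℕ} (k j : Fin q) :
    ∑ η : Fin q → Bool, bsign (η k) * bsign (η j) = if k = j then (2 ^ q : ℝ) else 0 := by
  rcases eq_or_ne k j with rfl | hkj
  · simp only [if_pos rfl, bsign_mul_self]
    rw [Finset.sum_const, Finset.card_univ]
    simp [Fintype.card_fun]
  · rw [if_neg hkj]
    have hinv : Function.Involutive
        (fun η : Fin q → Bool => Function.update η k (!(η k))) := by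
      intro η; funext i
      rcases eq_or_ne i k with rfl | hik
      · simp
      · simp [Function.update_of_ne hik]
    let e := hinv.toPerm
    have h2 : ∑ η : Fin q → Bool, bsign (η k) * bsign (η j)
        = ∑ η : Fin q → Bool, bsign ((e η) k) * bsign ((e η) j) :=
      (Equiv.sum_comp e fun η => bsign (η k) * bsign (η j)).symm
    have h1 : ∀ η : Fin q → Bool,
        bsign ((e η) k) * bsign ((e η) j) = -(bsign (η k) * bsign (η j)) := by
      intro η
      have hk : (e η) k = !(η k) := by
        simp [e, Function.Involutive.toPerm]
      have hj : (e η) j = η j := by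
        simp [e, Function.Involutive.toPerm, Function.update_of_ne (Ne.symm hkj)]
      rw [hk, hj, bsign_not]; ring
    rw [Finset.sum_congr rfl (fun η _ => h1 η), Finset.sum_neg_distrib] at h2
    linarith

lemma rand_identity {q : ℕ} (U : ℕ → X →L[ℂ] X) (k : Fin q) :
    ∑ η : Fin q → Bool, bsign (η k) • (∑ j : Fin q, bsign (η j) • U (j : ℕ))
      = (2 ^ q : ℝ) • U (k : ℕ) := by
  have h1 : ∀ η : Fin q → Bool,
      bsign (η k) • (∑ j : Fin q, bsign (η j) • U (j:ℕ))
        = ∑ j : Fin q, (bsign (η k) * bsign (η j)) • U (j:ℕ) := by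
    intro η; rw [Finset.smul_sum]; simp [smul_smul]
  rw [Finset.sum_congr rfl (fun η _ => h1 η), Finset.sum_comm]
  have h2 : ∀ j : Fin q, ∑ η : Fin q → Bool, (bsign (η k) * bsign (η j)) • U (j:ℕ)
      = (if k = j then (2^q:ℝ) else 0) • U (j:ℕ) := by
    intro j; rw [← Finset.sum_smul, sum_bsign_orth]
  rw [Finset.sum_congr rfl (fun j _ => h2 j)]
  simp [ite_smul]

lemma radAvg_pad {m s : ℕ} (x : Fin m → X) :
    radAvg (fun i : Fin (m + s) => if h : (i : ℕ) < m then x ⟨i, h⟩ else 0) = radAvg x := by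
  unfold radAvg
  have hinner : ∀ ε : Fin (m+s) → Bool,
      (∑ i : Fin (m+s), bsign (ε i) • (if h : (i:ℕ) < m then x ⟨i,h⟩ else 0))
        = ∑ i : Fin m, bsign (ε (Fin.castAdd s i)) • x i := by
    intro ε
    rw [← Equiv.sum_comp finSumFinEquiv
      (fun i : Fin (m+s) => bsign (ε i) • (if h : (i:ℕ) < m then x ⟨i,h⟩ else 0))]
    rw [Fintype.sum_sum_type]
    have hl : ∀ i : Fin m,
        bsign (ε (finSumFinEquiv (Sum.inl i))) •
          (if h : ((finSumFinEquiv (Sum.inl i) : Fin (m+s)) : ℕ) < m then x ⟨_, h⟩ else 0)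
          = bsign (ε (Fin.castAdd s i)) • x i := by
      intro i
      simp only [finSumFinEquiv_apply_left, Fin.coe_castAdd]
      simp [i.isLt]
    have hr : ∀ j : Fin s,
        bsign (ε (finSumFinEquiv (Sum.inr j))) •
          (if h : ((finSumFinEquiv (Sum.inr j) : Fin (m+s)) : ℕ) < m then x ⟨_, h⟩ else 0)
          = 0 := by
      intro j
      simp only [finSumFinEquiv_apply_right, Fin.coe_natAdd]
      simp [show ¬ (m + (j:ℕ) < m) by omega]
    rw [Finset.sum_congr rfl (fun i _ => hl i), Finset.sum_congr rfl (fun j _ => hr j)]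
    simp
  let E : (Fin (m+s) → Bool) ≃ ((Fin m → Bool) × (Fin s → Bool)) :=
    (Equiv.arrowCongr finSumFinEquiv (Equiv.refl Bool)).symm.trans
      (Equiv.sumArrowEquivProdArrow _ _ _)
  have hE1 : ∀ (ε : Fin (m+s) → Bool) (i : Fin m), (E ε).1 i = ε (Fin.castAdd s i) := by
    intro ε i
    simp [E, Equiv.sumArrowEquivProdArrow, Equiv.arrowCongr]
  have houter : ∑ ε : Fin (m+s) → Bool, ‖∑ i : Fin m, bsign (ε (Fin.castAdd s i)) • x i‖^2
      = 2^s * ∑ a : Fin m → Bool, ‖∑ i : Fin m, bsign (a i) • x i‖^2 := by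
    calc ∑ ε : Fin (m+s) → Bool, ‖∑ i : Fin m, bsign (ε (Fin.castAdd s i)) • x i‖^2
        = ∑ ε : Fin (m+s) → Bool, ‖∑ i : Fin m, bsign ((E ε).1 i) • x i‖^2 :=
          Finset.sum_congr rfl (fun ε _ => by simp only [hE1])
      _ = ∑ p : (Fin m → Bool) × (Fin s → Bool), ‖∑ i : Fin m, bsign (p.1 i) • x i‖^2 :=
          Equiv.sum_comp E
            (fun p : (Fin m → Bool) × (Fin s → Bool) => ‖∑ i : Fin m, bsign (p.1 i) • x i‖^2)
      _ = ∑ a : Fin m → Bool, ∑ _b : Fin s → Bool, ‖∑ i : Fin m, bsign (a i) • x i‖^2 :=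
          Fintype.sum_prod_type _
      _ = 2^s * ∑ a : Fin m → Bool, ‖∑ i : Fin m, bsign (a i) • x i‖^2 := by
          simp only [Finset.sum_const, Finset.card_univ, nsmul_eq_mul, ← Finset.sum_mul]
          rw [Fintype.card_fun, ← Finset.mul_sum]
          simp
  show (∑ ε : Fin (m+s) → Bool,
      ‖∑ i : Fin (m+s), bsign (ε i) • (if h : (i:ℕ) < m then x ⟨i,h⟩ else 0)‖^2) / 2^(m+s)
      = (∑ ε : Fin m → Bool, ‖∑ k : Fin m, bsign (ε k) • x k‖ ^ 2) / (2 ^ m : ℝ)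
  rw [Finset.sum_congr rfl (fun ε _ => by rw [hinner ε]), houter]
  rw [pow_add]
  field_simp

def flat {q : ℕ} (z : Fin q → Fin q → X) : Fin (q * q) → X :=
  fun j => z (finProdFinEquiv.symm j).1 (finProdFinEquiv.symm j).2

lemma radAvg_flat {q : ℕ} (z : Fin q → Fin q → X) :
    radAvg (flat z)
      = (∑ ξ : Fin q → Fin q → Bool,
          ‖∑ i : Fin q, ∑ k : Fin q, bsign (ξ i k) • z i k‖ ^ 2) / 2 ^ (q * q) := by
  unfold radAvg flat
  congr 1
  let E : (Fin (q*q) → Bool) ≃ (Fin q → Fin q → Bool) :=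
    ((Equiv.arrowCongr finProdFinEquiv (Equiv.refl Bool)).symm).trans (Equiv.curry _ _ _)
  have hE : ∀ (ζ : Fin (q*q) → Bool) (i k : Fin q), E ζ i k = ζ (finProdFinEquiv (i, k)) := by
    intro ζ i k
    simp [E, Equiv.curry, Equiv.arrowCongr]
  calc ∑ ζ : Fin (q*q) → Bool,
        ‖∑ j : Fin (q*q), bsign (ζ j) •
          z (finProdFinEquiv.symm j).1 (finProdFinEquiv.symm j).2‖^2
      = ∑ ζ : Fin (q*q) → Bool, ‖∑ i : Fin q, ∑ k : Fin q, bsign (E ζ i k) • z i k‖^2 := by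
        refine Finset.sum_congr rfl (fun ζ _ => ?_)
        congr 1
        rw [show (∑ j : Fin (q*q), bsign (ζ j) •
              z (finProdFinEquiv.symm j).1 (finProdFinEquiv.symm j).2)
            = ∑ p : Fin q × Fin q, bsign (ζ (finProdFinEquiv p)) • z p.1 p.2 from
          (Fintype.sum_equiv finProdFinEquiv
            (fun p : Fin q × Fin q => bsign (ζ (finProdFinEquiv p)) • z p.1 p.2)
            (fun j : Fin (q*q) =>
              bsign (ζ j) • z (finProdFinEquiv.symm j).1 (finProdFinEquiv.symm j).2)
            (fun p => by simp)).symm]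
        rw [show (∑ p : Fin q × Fin q, bsign (ζ (finProdFinEquiv p)) • z p.1 p.2)
            = ∑ i : Fin q, ∑ k : Fin q, bsign (ζ (finProdFinEquiv (i, k))) • z i k from
          Fintype.sum_prod_type _]
        exact congrArg (‖·‖) (Finset.sum_congr rfl
          (fun i _ => Finset.sum_congr rfl (fun k _ => by rw [hE])))
    _ = ∑ ξ : Fin q → Fin q → Bool, ‖∑ i : Fin q, ∑ k : Fin q, bsign (ξ i k) • z i k‖^2 :=
        Equiv.sum_comp E (fun ξ => ‖∑ i : Fin q, ∑ k : Fin q, bsign (ξ i k) • z i k‖^2)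

lemma sum_radAvg2_sign {q : ℕ} (z : Fin q → Fin q → X) :
    ∑ ξ : Fin q → Fin q → Bool, radAvg2 (fun i k => bsign (ξ i k) • z i k)
      = (2 ^ (q*q) : ℝ) * radAvg (flat z) := by
  rw [radAvg_flat, mul_div_cancel₀ _ (by positivity : ((2:ℝ) ^ (q*q)) ≠ 0)]
  unfold radAvg2
  rw [← Finset.sum_div]
  rw [div_eq_iff (by positivity : ((2:ℝ)^q * 2^q) ≠ 0)]
  -- reorganize triple sum
  have hco : ∀ (ξ : Fin q → Fin q → Bool) (ε η : Fin q → Bool) (i k : Fin q),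
      (bsign (ε i) * bsign (η k)) • (bsign (ξ i k) • z i k)
        = bsign (ξ i k == (ε i == η k)) • z i k := by
    intro ξ ε η i k
    rw [smul_smul, bsign_beq, bsign_beq]
    ring_nf
  have hinv : ∀ c : Fin q → Fin q → Bool, Function.Involutive
      (fun ξ : Fin q → Fin q → Bool => fun i k => (ξ i k == c i k)) := by
    intro c ξ
    funext i k
    show ((ξ i k == c i k) == c i k) = ξ i k
    cases ξ i k <;> cases c i k <;> rfl
  have hfix : ∀ (ε η : Fin q → Bool),
      ∑ ξ : Fin q → Fin q → Bool,
        ‖∑ i : Fin q, ∑ k : Fin q, bsign (ξ i k == (ε i == η k)) • z i k‖^2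
      = ∑ ξ : Fin q → Fin q → Bool, ‖∑ i : Fin q, ∑ k : Fin q, bsign (ξ i k) • z i k‖^2 := by
    intro ε η
    exact Equiv.sum_comp ((hinv (fun i k => (ε i == η k))).toPerm)
      (fun ξ => ‖∑ i : Fin q, ∑ k : Fin q, bsign (ξ i k) • z i k‖^2)
  calc ∑ ξ : Fin q → Fin q → Bool, ∑ ε : Fin q → Bool, ∑ η : Fin q → Bool,
        ‖∑ i, ∑ k, (bsign (ε i) * bsign (η k)) • (bsign (ξ i k) • z i k)‖^2
      = ∑ ε : Fin q → Bool, ∑ η : Fin q → Bool, ∑ ξ : Fin q → Fin q → Bool,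
        ‖∑ i, ∑ k, bsign (ξ i k == (ε i == η k)) • z i k‖^2 := by
        rw [Finset.sum_comm]
        refine Finset.sum_congr rfl (fun ε _ => ?_)
        rw [Finset.sum_comm]
        refine Finset.sum_congr rfl (fun η _ => Finset.sum_congr rfl (fun ξ _ => ?_))
        have heq : (∑ i : Fin q, ∑ k : Fin q, (bsign (ε i) * bsign (η k)) • (bsign (ξ i k) • z i k))
            = ∑ i : Fin q, ∑ k : Fin q, bsign (ξ i k == (ε i == η k)) • z i k :=
          Finset.sum_congr rfl (fun i _ => Finset.sum_congr rfl (fun k _ => hco ξ ε η i k))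
        rw [heq]
    _ = ∑ ε : Fin q → Bool, ∑ η : Fin q → Bool, ∑ ξ : Fin q → Fin q → Bool,
        ‖∑ i : Fin q, ∑ k : Fin q, bsign (ξ i k) • z i k‖^2 :=
        Finset.sum_congr rfl (fun ε _ => Finset.sum_congr rfl (fun η _ => hfix ε η))
    _ = (∑ ξ : Fin q → Fin q → Bool,
          ‖∑ i : Fin q, ∑ k : Fin q, bsign (ξ i k) • z i k‖^2) * (2^q * 2^q) := by
        simp only [Finset.sum_const, Finset.card_univ, nsmul_eq_mul, Fintype.card_fun,
          Fintype.card_bool, Fintype.card_fin]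
        push_cast
        ring

lemma flat_le_radAvg2 {Cα : ℝ} (hα : PropAlphaWith Cα X) {q : ℕ} (z : Fin q → Fin q → X) :
    radAvg (flat z) ≤ Cα ^ 2 * radAvg2 z := by
  have key := sum_radAvg2_sign z
  have hbound : ∀ ξ : Fin q → Fin q → Bool,
      radAvg2 (fun i k => bsign (ξ i k) • z i k) ≤ Cα ^ 2 * radAvg2 z := by
    intro ξ
    have h1 := hα q z (fun i k => ((bsign (ξ i k) : ℝ) : ℂ)) (fun i k => norm_bsign_le _)
    exact sq_le_of_sqrt_le (radAvg2_nonneg _) (radAvg2_nonneg _) h1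
  have hsum : (2 ^ (q*q) : ℝ) * radAvg (flat z) ≤ (2 ^ (q*q) : ℝ) * (Cα^2 * radAvg2 z) := by
    rw [← key]
    calc ∑ ξ : Fin q → Fin q → Bool, radAvg2 (fun i k => bsign (ξ i k) • z i k)
        ≤ ∑ _ξ : Fin q → Fin q → Bool, Cα^2 * radAvg2 z :=
          Finset.sum_le_sum (fun ξ _ => hbound ξ)
      _ = (2 ^ (q*q) : ℝ) * (Cα^2 * radAvg2 z) := by
          simp only [Finset.sum_const, Finset.card_univ, nsmul_eq_mul, Fintype.card_fun,
            Fintype.card_bool, Fintype.card_fin]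
          push_cast
          ring
  exact le_of_mul_le_mul_left hsum (by positivity)

lemma radAvg2_le_flat {Cα : ℝ} (hα : PropAlphaWith Cα X) {q : ℕ} (z : Fin q → Fin q → X) :
    radAvg2 z ≤ Cα ^ 2 * radAvg (flat z) := by
  have key := sum_radAvg2_sign z
  have hbound : ∀ ξ : Fin q → Fin q → Bool,
      radAvg2 z ≤ Cα ^ 2 * radAvg2 (fun i k => bsign (ξ i k) • z i k) := by
    intro ξ
    have h1 := hα q (fun i k => bsign (ξ i k) • z i k)
      (fun i k => ((bsign (ξ i k) : ℝ) : ℂ)) (fun i k => norm_bsign_le _)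
    have h2 : (fun i k => ((bsign (ξ i k) : ℝ) : ℂ) • (bsign (ξ i k) • z i k)) = z := by
      funext i k
      show bsign (ξ i k) • bsign (ξ i k) • z i k = z i k
      rw [smul_smul, bsign_mul_self, one_smul]
    rw [h2] at h1
    exact sq_le_of_sqrt_le (radAvg2_nonneg _) (radAvg2_nonneg _) h1
  have hsum : (2 ^ (q*q) : ℝ) * radAvg2 z
      ≤ (2 ^ (q*q) : ℝ) * (Cα^2 * radAvg (flat z)) := by
    calc (2 ^ (q*q) : ℝ) * radAvg2 z
        = ∑ _ξ : Fin q → Fin q → Bool, radAvg2 z := by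
          simp only [Finset.sum_const, Finset.card_univ, nsmul_eq_mul, Fintype.card_fun,
            Fintype.card_bool, Fintype.card_fin]
          push_cast
          ring
      _ ≤ ∑ ξ : Fin q → Fin q → Bool, Cα^2 * radAvg2 (fun i k => bsign (ξ i k) • z i k) :=
          Finset.sum_le_sum (fun ξ _ => hbound ξ)
      _ = Cα^2 * ((2 ^ (q*q) : ℝ) * radAvg (flat z)) := by
          rw [← Finset.mul_sum, key]
      _ = (2 ^ (q*q) : ℝ) * (Cα^2 * radAvg (flat z)) := by ring
  exact le_of_mul_le_mul_left hsum (by positivity)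

lemma radAvg_single (v : X) : radAvg (fun _ : Fin 1 => v) = ‖v‖ ^ 2 := by
  unfold radAvg
  rw [Fintype.sum_equiv (Equiv.funUnique (Fin 1) Bool)
    (fun ε : Fin 1 → Bool => ‖∑ k : Fin 1, bsign (ε k) • v‖^2)
    (fun b : Bool => ‖bsign b • v‖^2)
    (fun ε => by simp [Fin.sum_univ_one, Equiv.funUnique])]
  rw [Fintype.sum_bool]
  have h1 : ‖bsign true • v‖^2 = ‖v‖^2 := by norm_num [bsign]
  have h2 : ‖bsign false • v‖^2 = ‖v‖^2 := by
    have : bsign false • v = -v := by norm_num [bsign]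
    rw [this, norm_neg]
  rw [h1, h2]
  ring

lemma step4 {q : ℕ} (V : ℕ → X →L[ℂ] X) {M : ℝ} (hM : 0 ≤ M)
    (hV : ∀ η : Fin q → Bool, ‖∑ j : Fin q, bsign (η j) • V (j:ℕ)‖ ≤ M)
    (x' : Fin q → X) :
    radAvg2 (fun i k => V (k:ℕ) (x' i)) ≤ M ^ 2 * radAvg x' := by
  unfold radAvg2 radAvg
  show (∑ ε : Fin q → Bool, ∑ η : Fin q → Bool,
      ‖∑ j : Fin q, ∑ k : Fin q, (bsign (ε j) * bsign (η k)) • V (k:ℕ) (x' j)‖ ^ 2)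
        / ((2^q : ℝ) * (2^q : ℝ))
      ≤ M^2 * ((∑ ε : Fin q → Bool, ‖∑ i : Fin q, bsign (ε i) • x' i‖ ^ 2) / (2^q : ℝ))
  have key : ∀ ε η : Fin q → Bool,
      (∑ i : Fin q, ∑ k : Fin q, (bsign (ε i) * bsign (η k)) • V (k:ℕ) (x' i))
        = (∑ j : Fin q, bsign (η j) • V (j:ℕ)) (∑ i : Fin q, bsign (ε i) • x' i) := by
    intro ε η
    rw [ContinuousLinearMap.sum_apply, Finset.sum_comm]
    refine Finset.sum_congr rfl (fun k _ => ?_)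
    rw [ContinuousLinearMap.smul_apply, map_sum, Finset.smul_sum]
    refine Finset.sum_congr rfl (fun i _ => ?_)
    simp [ContinuousLinearMap.map_smul_of_tower, smul_smul, mul_comm]
  have hb : ∀ ε η : Fin q → Bool,
      ‖∑ i : Fin q, ∑ k : Fin q, (bsign (ε i) * bsign (η k)) • V (k:ℕ) (x' i)‖^2
        ≤ M^2 * ‖∑ i : Fin q, bsign (ε i) • x' i‖^2 := by
    intro ε η
    rw [key]
    have h1 : ‖(∑ j : Fin q, bsign (η j) • V (j:ℕ)) (∑ i : Fin q, bsign (ε i) • x' i)‖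
        ≤ M * ‖∑ i : Fin q, bsign (ε i) • x' i‖ :=
      le_trans (ContinuousLinearMap.le_opNorm _ _)
        (mul_le_mul_of_nonneg_right (hV η) (norm_nonneg _))
    calc ‖(∑ j : Fin q, bsign (η j) • V (j:ℕ)) (∑ i : Fin q, bsign (ε i) • x' i)‖^2
        ≤ (M * ‖∑ i : Fin q, bsign (ε i) • x' i‖)^2 :=
          pow_le_pow_left₀ (norm_nonneg _) h1 2
      _ = M^2 * ‖∑ i : Fin q, bsign (ε i) • x' i‖^2 := by ring
  have h2 : M^2 * ((∑ ε : Fin q → Bool, ‖∑ i : Fin q, bsign (ε i) • x' i‖^2) / (2^q : ℝ))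
      = (∑ ε : Fin q → Bool, ∑ _η : Fin q → Bool,
          M^2 * ‖∑ i : Fin q, bsign (ε i) • x' i‖^2) / ((2^q : ℝ) * (2^q : ℝ)) := by
    simp only [Finset.sum_const, Finset.card_univ, nsmul_eq_mul, Fintype.card_fun,
      Fintype.card_bool, Fintype.card_fin, ← Finset.mul_sum]
    push_cast
    field_simp
  rw [h2]
  gcongr with ε hε η hη
  exact hb ε η

lemma step1 {q : ℕ} (U V : ℕ → X →L[ℂ] X) {M : ℝ} (hM : 0 ≤ M)
    (hU : ∀ η : Fin q → Bool, ‖∑ j : Fin q, bsign (η j) • U (j:ℕ)‖ ≤ M)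
    (a : Fin q → Fin q → ℂ) (T' : Fin q → Fin q → X →L[ℂ] X)
    (hcomm : ∀ i k : Fin q, T' i k ∘L U (k:ℕ) = U (k:ℕ) ∘L T' i k)
    (x' : Fin q → X) :
    radAvg (fun i : Fin q => ∑ k : Fin q, a i k • T' i k (U (k:ℕ) (V (k:ℕ) (x' i))))
      ≤ M ^ 2 * radAvg2 (fun i k => a i k • T' i k (V (k:ℕ) (x' i))) := by
  have hne : ((2:ℝ)^q) ≠ 0 := by positivity
  set y : Fin q → Fin q → X := fun i k => a i k • T' i k (V (k:ℕ) (x' i)) with hy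
  have hUv : ∀ (k : Fin q) (v : X),
      ∑ η : Fin q → Bool, bsign (η k) • (∑ j : Fin q, bsign (η j) • U (j:ℕ)) v
        = (2^q : ℝ) • U (k:ℕ) v := by
    intro k v
    have h0 := congrArg (fun S : X →L[ℂ] X => S v) (rand_identity U k)
    simpa only [ContinuousLinearMap.sum_apply, ContinuousLinearMap.smul_apply] using h0
  have hU2 : ∀ (k : Fin q) (v : X),
      U (k:ℕ) v = (2^q : ℝ)⁻¹ •
        ∑ η : Fin q → Bool, bsign (η k) • (∑ j : Fin q, bsign (η j) • U (j:ℕ)) v := by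
    intro k v
    rw [hUv, inv_smul_smul₀ hne]
  have hkey : ∀ ε : Fin q → Bool,
      (∑ i : Fin q, bsign (ε i) • ∑ k : Fin q, a i k • T' i k (U (k:ℕ) (V (k:ℕ) (x' i))))
        = (2^q : ℝ)⁻¹ • ∑ η : Fin q → Bool,
            (∑ j : Fin q, bsign (η j) • U (j:ℕ))
              (∑ i : Fin q, ∑ k : Fin q, (bsign (ε i) * bsign (η k)) • y i k) := by
    intro ε
    have h1 : ∀ i k : Fin q, a i k • T' i k (U (k:ℕ) (V (k:ℕ) (x' i))) = U (k:ℕ) (y i k) := by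
      intro i k
      have hc := congrArg (fun S : X →L[ℂ] X => S (V (k:ℕ) (x' i))) (hcomm i k)
      simp only [ContinuousLinearMap.comp_apply] at hc
      rw [hc]
      exact ((U (k:ℕ)).map_smul _ _).symm
    calc ∑ i : Fin q, bsign (ε i) • ∑ k : Fin q, a i k • T' i k (U (k:ℕ) (V (k:ℕ) (x' i)))
        = ∑ i : Fin q, ∑ k : Fin q, bsign (ε i) •
            ((2^q : ℝ)⁻¹ • ∑ η : Fin q → Bool,
              bsign (η k) • (∑ j : Fin q, bsign (η j) • U (j:ℕ)) (y i k)) := by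
          refine Finset.sum_congr rfl fun i _ => ?_
          rw [Finset.smul_sum]
          exact Finset.sum_congr rfl fun k _ => by rw [h1, ← hU2]
      _ = (2^q : ℝ)⁻¹ • ∑ i : Fin q, ∑ k : Fin q, ∑ η : Fin q → Bool,
            (bsign (ε i) * bsign (η k)) • (∑ j : Fin q, bsign (η j) • U (j:ℕ)) (y i k) := by
          rw [Finset.smul_sum]
          refine Finset.sum_congr rfl fun i _ => ?_
          rw [Finset.smul_sum]
          refine Finset.sum_congr rfl fun k _ => ?_
          rw [smul_comm (bsign (ε i)) ((2:ℝ)^q)⁻¹]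
          congr 1
          rw [Finset.smul_sum]
          exact Finset.sum_congr rfl fun η _ => by rw [smul_smul]
      _ = (2^q : ℝ)⁻¹ • ∑ η : Fin q → Bool, ∑ i : Fin q, ∑ k : Fin q,
            (bsign (ε i) * bsign (η k)) • (∑ j : Fin q, bsign (η j) • U (j:ℕ)) (y i k) := by
          congr 1
          rw [show (∑ i : Fin q, ∑ k : Fin q, ∑ η : Fin q → Bool,
              (bsign (ε i) * bsign (η k)) • (∑ j : Fin q, bsign (η j) • U (j:ℕ)) (y i k))
            = ∑ i : Fin q, ∑ η : Fin q → Bool, ∑ k : Fin q,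
              (bsign (ε i) * bsign (η k)) • (∑ j : Fin q, bsign (η j) • U (j:ℕ)) (y i k) from
            Finset.sum_congr rfl fun i _ => Finset.sum_comm]
          exact Finset.sum_comm
      _ = (2^q : ℝ)⁻¹ • ∑ η : Fin q → Bool,
            (∑ j : Fin q, bsign (η j) • U (j:ℕ))
              (∑ i : Fin q, ∑ k : Fin q, (bsign (ε i) * bsign (η k)) • y i k) := by
          congr 1
          refine Finset.sum_congr rfl fun η _ => ?_
          rw [map_sum]
          refine Finset.sum_congr rfl fun i _ => ?_
          rw [map_sum]
          exact Finset.sum_congr rfl fun k _ =>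
            (ContinuousLinearMap.map_smul_of_tower _ _ _).symm
  have hcard : ((Finset.univ : Finset (Fin q → Bool)).card : ℝ) = 2^q := by
    rw [Finset.card_univ, Fintype.card_fun]
    push_cast
    simp
  have hnε : ∀ ε : Fin q → Bool,
      ‖∑ i : Fin q, bsign (ε i) • ∑ k : Fin q, a i k • T' i k (U (k:ℕ) (V (k:ℕ) (x' i)))‖^2
        ≤ M^2 * ((2^q : ℝ)⁻¹ * ∑ η : Fin q → Bool,
            ‖∑ i : Fin q, ∑ k : Fin q, (bsign (ε i) * bsign (η k)) • y i k‖^2) := by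
    intro ε
    rw [hkey ε]
    have hn1 : ‖(2^q : ℝ)⁻¹ • ∑ η : Fin q → Bool,
        (∑ j : Fin q, bsign (η j) • U (j:ℕ))
          (∑ i : Fin q, ∑ k : Fin q, (bsign (ε i) * bsign (η k)) • y i k)‖
        ≤ (2^q : ℝ)⁻¹ * ∑ η : Fin q → Bool,
            M * ‖∑ i : Fin q, ∑ k : Fin q, (bsign (ε i) * bsign (η k)) • y i k‖ := by
      rw [norm_smul, Real.norm_eq_abs, abs_of_pos (by positivity : (0:ℝ) < (2^q : ℝ)⁻¹)]
      refine mul_le_mul_of_nonneg_left ?_ (by positivity)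
      refine le_trans (norm_sum_le _ _) (Finset.sum_le_sum fun η _ => ?_)
      exact le_trans (ContinuousLinearMap.le_opNorm _ _)
        (mul_le_mul_of_nonneg_right (hU η) (norm_nonneg _))
    calc ‖(2^q : ℝ)⁻¹ • ∑ η : Fin q → Bool,
          (∑ j : Fin q, bsign (η j) • U (j:ℕ))
            (∑ i : Fin q, ∑ k : Fin q, (bsign (ε i) * bsign (η k)) • y i k)‖^2
        ≤ ((2^q : ℝ)⁻¹ * ∑ η : Fin q → Bool,
            M * ‖∑ i : Fin q, ∑ k : Fin q, (bsign (ε i) * bsign (η k)) • y i k‖)^2 :=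
          pow_le_pow_left₀ (norm_nonneg _) hn1 2
      _ = ((2^q : ℝ)⁻¹)^2 * M^2 * (∑ η : Fin q → Bool,
            ‖∑ i : Fin q, ∑ k : Fin q, (bsign (ε i) * bsign (η k)) • y i k‖)^2 := by
          rw [← Finset.mul_sum]
          ring
      _ ≤ ((2^q : ℝ)⁻¹)^2 * M^2 * ((2^q : ℝ) * ∑ η : Fin q → Bool,
            ‖∑ i : Fin q, ∑ k : Fin q, (bsign (ε i) * bsign (η k)) • y i k‖^2) := by
          refine mul_le_mul_of_nonneg_left ?_ (by positivity)
          have := sq_sum_le_card_mul_sum_sq (s := (Finset.univ : Finset (Fin q → Bool)))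
            (f := fun η => ‖∑ i : Fin q, ∑ k : Fin q, (bsign (ε i) * bsign (η k)) • y i k‖)
          rwa [hcard] at this
      _ = M^2 * ((2^q : ℝ)⁻¹ * ∑ η : Fin q → Bool,
            ‖∑ i : Fin q, ∑ k : Fin q, (bsign (ε i) * bsign (η k)) • y i k‖^2) := by
          field_simp
  unfold radAvg radAvg2
  show (∑ ε : Fin q → Bool,
      ‖∑ i : Fin q, bsign (ε i) • ∑ k : Fin q, a i k • T' i k (U (k:ℕ) (V (k:ℕ) (x' i)))‖^2)
        / (2^q : ℝ)
      ≤ M^2 * ((∑ ε : Fin q → Bool, ∑ η : Fin q → Bool,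
          ‖∑ i : Fin q, ∑ k : Fin q, (bsign (ε i) * bsign (η k)) • y i k‖^2)
            / ((2^q : ℝ) * (2^q : ℝ)))
  have hrhs : M^2 * ((∑ ε : Fin q → Bool, ∑ η : Fin q → Bool,
      ‖∑ i : Fin q, ∑ k : Fin q, (bsign (ε i) * bsign (η k)) • y i k‖^2)
        / ((2^q : ℝ) * (2^q : ℝ)))
      = (∑ ε : Fin q → Bool, M^2 * ((2^q : ℝ)⁻¹ * ∑ η : Fin q → Bool,
          ‖∑ i : Fin q, ∑ k : Fin q, (bsign (ε i) * bsign (η k)) • y i k‖^2)) / (2^q : ℝ) := by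
    rw [← Finset.mul_sum, ← Finset.mul_sum]
    field_simp
  rw [hrhs]
  gcongr with ε hε
  exact hnε ε

end MyAuxST4

/-- In a space with property (α) (with constant `Cα`), if the sign-sums of
`(U_k)` and `(V_k)` are uniformly bounded by `M` and `𝒯` is an R-bounded family (constant `R`)
commuting with all `U_k, V_k`, then `{∑_k α_k T_k U_k V_k : |α_k| ≤ 1, T_k ∈ 𝒯}` is
R-bounded with constant `C·R·M²`, where `C` depends only on the property (α) constant. -/
theorem stmt_4 : ∀ Cα : ℝ, ∃ C : ℝ,
    ∀ (X : Type) [NormedAddCommGroup X] [NormedSpace ℂ X] [CompleteSpace X],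
    PropAlphaWith Cα X →
    ∀ (U V : ℕ → X →L[ℂ] X) (M R : ℝ) (𝒯 : Set (X →L[ℂ] X)),
      (∀ (n : ℕ) (ε : ℕ → Bool), ‖∑ k ∈ Finset.range n, bsign (ε k) • U k‖ ≤ M) →
      (∀ (n : ℕ) (ε : ℕ → Bool), ‖∑ k ∈ Finset.range n, bsign (ε k) • V k‖ ≤ M) →
      RBoundedWith R 𝒯 →
      (∀ T ∈ 𝒯, ∀ k : ℕ, T ∘L U k = U k ∘L T ∧ T ∘L V k = V k ∘L T) →
      RBoundedWith (C * R * M ^ 2)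
        {W | ∃ (n : ℕ) (α : ℕ → ℂ) (T : ℕ → X →L[ℂ] X),
          (∀ k, ‖α k‖ ≤ 1) ∧ (∀ k, T k ∈ 𝒯) ∧
          W = ∑ k ∈ Finset.range n, α k • (T k ∘L U k ∘L V k)} := by
  intro Cα
  refine ⟨|Cα| ^ 3, ?_⟩
  intro X _ _ _ hα U V M R 𝒯 hU hV hR hcomm
  intro m W hW x
  rcases Nat.eq_zero_or_pos m with rfl | hm
  · have h0 : radAvg (fun k : Fin 0 => W k (x k)) = 0 := by simp [radAvg]
    have h0' : radAvg x = 0 := by simp [radAvg]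
    rw [h0, h0', Real.sqrt_zero, mul_zero]
  · simp only [Set.mem_setOf_eq] at hW
    choose nn aa TT haa hTT hWeq using hW
    set N := Finset.univ.sup nn with hN
    set i0 : Fin m := ⟨0, hm⟩ with hi0
    set T0 := TT i0 0 with hT0def
    have hT0 : T0 ∈ 𝒯 := hTT i0 0
    have hM : 0 ≤ M := by simpa using hU 0 (fun _ => true)
    have hUq : ∀ η : Fin (m+N) → Bool, ‖∑ j : Fin (m+N), bsign (η j) • U (j:ℕ)‖ ≤ M := by
      intro η
      have h := hU (m+N) (fun j => if h : j < m+N then η ⟨j, h⟩ else true)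
      rw [← Fin.sum_univ_eq_sum_range
        (fun j => bsign (if h : j < m+N then η ⟨j, h⟩ else true) • U j) (m+N)] at h
      simpa using h
    have hVq : ∀ η : Fin (m+N) → Bool, ‖∑ j : Fin (m+N), bsign (η j) • V (j:ℕ)‖ ≤ M := by
      intro η
      have h := hV (m+N) (fun j => if h : j < m+N then η ⟨j, h⟩ else true)
      rw [← Fin.sum_univ_eq_sum_range
        (fun j => bsign (if h : j < m+N then η ⟨j, h⟩ else true) • V j) (m+N)] at h
      simpa using h
    set x' : Fin (m+N) → X := fun i => if h : (i:ℕ) < m then x ⟨i, h⟩ else 0 with hx'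
    set a : Fin (m+N) → Fin (m+N) → ℂ := fun i k =>
      if h : (i:ℕ) < m then (if (k:ℕ) < nn ⟨i, h⟩ then aa ⟨i, h⟩ k else 0) else 0 with ha
    set T' : Fin (m+N) → Fin (m+N) → X →L[ℂ] X := fun i k =>
      if h : (i:ℕ) < m then TT ⟨i, h⟩ (k:ℕ) else T0 with hT'
    have hT'mem : ∀ i k, T' i k ∈ 𝒯 := by
      intro i k
      by_cases h : (i:ℕ) < m
      · simp only [hT', dif_pos h]; exact hTT _ _
      · simp only [hT', dif_neg h]; exact hT0
    have haw : ∀ i k, ‖a i k‖ ≤ 1 := by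
      intro i k
      by_cases h : (i:ℕ) < m
      · simp only [ha, dif_pos h]
        split
        · exact haa _ _
        · simp
      · simp [ha, dif_neg h]
    rcases lt_or_ge R 0 with hR0 | hR0
    · -- degenerate: X is trivial
      have hzero : ∀ v : X, v = 0 := by
        intro v
        have h := hR 1 (fun _ => T0) (fun _ => hT0) (fun _ => v)
        have h' : Real.sqrt (radAvg (fun _ : Fin 1 => T0 v))
            ≤ R * Real.sqrt (radAvg (fun _ : Fin 1 => v)) := h
        rw [radAvg_single, radAvg_single, Real.sqrt_sq (norm_nonneg _),
          Real.sqrt_sq (norm_nonneg _)] at h'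
        have h1 : (0:ℝ) ≤ R * ‖v‖ := le_trans (norm_nonneg _) h'
        have h2 : ‖v‖ ≤ 0 := by nlinarith
        exact norm_eq_zero.mp (le_antisymm h2 (norm_nonneg v))
      have hz : ∀ (n : ℕ) (u : Fin n → X), radAvg u = 0 := by
        intro n u
        unfold radAvg
        rw [Finset.sum_congr rfl (fun ε _ => by
          rw [hzero (∑ k, bsign (ε k) • u k), norm_zero])]
        simp
      rw [hz m (fun k => W k (x k)), hz m x, Real.sqrt_zero, mul_zero]
    · -- main case
      have hNle : ∀ i : Fin m, nn i ≤ N := fun i => Finset.le_sup (Finset.mem_univ i)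
      have hwkey : ∀ i : Fin (m+N),
          (if h : (i:ℕ) < m then W ⟨i, h⟩ (x ⟨i, h⟩) else 0)
            = ∑ k : Fin (m+N), a i k • T' i k (U (k:ℕ) (V (k:ℕ) (x' i))) := by
        intro i
        by_cases h : (i:ℕ) < m
        · rw [dif_pos h]
          have hsum : ∀ k : Fin (m+N), a i k • T' i k (U (k:ℕ) (V (k:ℕ) (x' i)))
              = (fun k : ℕ => (if k < nn ⟨i,h⟩ then aa ⟨i,h⟩ k else 0) •
                  TT ⟨i,h⟩ k (U k (V k (x ⟨i,h⟩)))) (k:ℕ) := by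
            intro k
            simp only [ha, hT', hx', dif_pos h]
          rw [Finset.sum_congr rfl fun k _ => hsum k]
          rw [Fin.sum_univ_eq_sum_range
            (fun k : ℕ => (if k < nn ⟨i,h⟩ then aa ⟨i,h⟩ k else 0) •
              TT ⟨i,h⟩ k (U k (V k (x ⟨i,h⟩)))) (m+N)]
          rw [← Finset.sum_subset
            (Finset.range_subset_range.mpr (le_trans (hNle ⟨i,h⟩) (by omega)))
            (fun k _ hk => by
              rw [Finset.mem_range, not_lt] at hk
              rw [if_neg (by omega), zero_smul])]
          rw [hWeq ⟨i, h⟩, ContinuousLinearMap.sum_apply]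
          refine Finset.sum_congr rfl fun k hk => ?_
          rw [Finset.mem_range] at hk
          rw [if_pos hk]
          simp [ContinuousLinearMap.smul_apply, ContinuousLinearMap.comp_apply]
        · rw [dif_neg h]
          symm
          refine Finset.sum_eq_zero fun k _ => ?_
          have : a i k = 0 := by simp only [ha, dif_neg h]
          rw [this, zero_smul]
      have hx'pad : radAvg x' = radAvg x := radAvg_pad x
      have hpad1 : radAvg (fun i : Fin m => W i (x i))
          = radAvg (fun i : Fin (m+N) =>
              if h : (i:ℕ) < m then W ⟨i,h⟩ (x ⟨i,h⟩) else 0) :=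
        (radAvg_pad (fun i : Fin m => W i (x i))).symm
      have hw2 : radAvg (fun i : Fin (m+N) =>
            if h : (i:ℕ) < m then W ⟨i,h⟩ (x ⟨i,h⟩) else 0)
          = radAvg (fun i : Fin (m+N) =>
              ∑ k : Fin (m+N), a i k • T' i k (U (k:ℕ) (V (k:ℕ) (x' i)))) :=
        congrArg radAvg (funext hwkey)
      have hs1 := step1 U V hM hUq a T'
        (fun i k => (hcomm (T' i k) (hT'mem i k) (k:ℕ)).1) x'
      have hs2 : radAvg2 (fun i k => a i k • T' i k (V (k:ℕ) (x' i)))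
          ≤ Cα^2 * radAvg2 (fun i k => T' i k (V (k:ℕ) (x' i))) :=
        sq_le_of_sqrt_le (radAvg2_nonneg _) (radAvg2_nonneg _)
          (hα (m+N) (fun i k => T' i k (V (k:ℕ) (x' i))) a haw)
      have hs3a := radAvg2_le_flat hα (fun i k => T' i k (V (k:ℕ) (x' i)))
      have hs3b : radAvg (flat (fun i k => T' i k (V (k:ℕ) (x' i))))
          ≤ R^2 * radAvg (flat (fun i k => V (k:ℕ) (x' i))) := by
        have h1 := hR ((m+N)*(m+N))
          (fun j => T' (finProdFinEquiv.symm j).1 (finProdFinEquiv.symm j).2)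
          (fun j => hT'mem _ _)
          (flat (fun i k => V (k:ℕ) (x' i)))
        exact sq_le_of_sqrt_le (radAvg_nonneg _) (radAvg_nonneg _) h1
      have hs3c := flat_le_radAvg2 hα (fun i k => V (k:ℕ) (x' i))
      have hs4 := step4 V hM hVq x'
      have hchain : radAvg (fun i : Fin m => W i (x i))
          ≤ M^2 * (Cα^2 * (Cα^2 * (R^2 * (Cα^2 * (M^2 * radAvg x))))) := by
        calc radAvg (fun i : Fin m => W i (x i))
            = radAvg (fun i : Fin (m+N) =>
                ∑ k : Fin (m+N), a i k • T' i k (U (k:ℕ) (V (k:ℕ) (x' i)))) := by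
              rw [hpad1, hw2]
          _ ≤ M^2 * radAvg2 (fun i k => a i k • T' i k (V (k:ℕ) (x' i))) := hs1
          _ ≤ M^2 * (Cα^2 * radAvg2 (fun i k => T' i k (V (k:ℕ) (x' i)))) :=
              mul_le_mul_of_nonneg_left hs2 (sq_nonneg M)
          _ ≤ M^2 * (Cα^2 * (Cα^2 * radAvg (flat (fun i k => T' i k (V (k:ℕ) (x' i)))))) :=
              mul_le_mul_of_nonneg_left
                (mul_le_mul_of_nonneg_left hs3a (sq_nonneg Cα)) (sq_nonneg M)
          _ ≤ M^2 * (Cα^2 * (Cα^2 * (R^2 * radAvg (flat (fun i k => V (k:ℕ) (x' i)))))) :=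
              mul_le_mul_of_nonneg_left (mul_le_mul_of_nonneg_left
                (mul_le_mul_of_nonneg_left hs3b (sq_nonneg Cα)) (sq_nonneg Cα)) (sq_nonneg M)
          _ ≤ M^2 * (Cα^2 * (Cα^2 * (R^2 * (Cα^2 * radAvg2 (fun i k => V (k:ℕ) (x' i)))))) :=
              mul_le_mul_of_nonneg_left (mul_le_mul_of_nonneg_left
                (mul_le_mul_of_nonneg_left
                  (mul_le_mul_of_nonneg_left hs3c (sq_nonneg R)) (sq_nonneg Cα))
                (sq_nonneg Cα)) (sq_nonneg M)
          _ ≤ M^2 * (Cα^2 * (Cα^2 * (R^2 * (Cα^2 * (M^2 * radAvg x'))))) :=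
              mul_le_mul_of_nonneg_left (mul_le_mul_of_nonneg_left
                (mul_le_mul_of_nonneg_left (mul_le_mul_of_nonneg_left
                  (mul_le_mul_of_nonneg_left hs4 (sq_nonneg Cα)) (sq_nonneg R))
                (sq_nonneg Cα)) (sq_nonneg Cα)) (sq_nonneg M)
          _ = M^2 * (Cα^2 * (Cα^2 * (R^2 * (Cα^2 * (M^2 * radAvg x))))) := by
              rw [hx'pad]
      have hc : 0 ≤ |Cα|^3 * R * M^2 :=
        mul_nonneg (mul_nonneg (by positivity) hR0) (sq_nonneg M)
      have hsq : (|Cα|^3 * R * M^2)^2 * radAvg x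
          = M^2 * (Cα^2 * (Cα^2 * (R^2 * (Cα^2 * (M^2 * radAvg x))))) := by
        have habs : (|Cα|^3)^2 = Cα^2 * (Cα^2 * Cα^2) := by
          rw [← pow_mul, show (3*2 = 6) from rfl, show (6 = 2*3) from rfl, pow_mul, _root_.sq_abs]
          ring
        calc (|Cα|^3 * R * M^2)^2 * radAvg x
            = (|Cα|^3)^2 * (R^2 * (M^2 * M^2 * radAvg x)) := by ring
          _ = (Cα^2 * (Cα^2 * Cα^2)) * (R^2 * (M^2 * M^2 * radAvg x)) := by rw [habs]
          _ = M^2 * (Cα^2 * (Cα^2 * (R^2 * (Cα^2 * (M^2 * radAvg x))))) := by ring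
      calc Real.sqrt (radAvg fun k => W k (x k))
          ≤ Real.sqrt ((|Cα|^3 * R * M^2)^2 * radAvg x) := by
            apply Real.sqrt_le_sqrt
            rw [hsq]
            exact hchain
        _ = |Cα|^3 * R * M^2 * Real.sqrt (radAvg x) := by
            rw [Real.sqrt_mul (sq_nonneg (|Cα|^3 * R * M^2)) (radAvg x), Real.sqrt_sq hc]

end
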